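/- If ∑_l |⟨ψ_l,ψ_k⟩|² < ∞ for every k, then the analysis operator C of (ψ_k) is densely defined. -/

import Mathlib

open Filter Topology
open scoped ComplexInnerProductSpace

/-- If `∑_l |⟨ψ l, ψ k⟩|² < ∞` for every `k`, then the analysis operator `C` of `(ψ k)`
is densely defined, i.e. `dom C = {f : (⟨f, ψ k⟩)_k ∈ ℓ²}` is dense in `H`. -/
theorem stmt4 {H : Type*} [NormedAddCommGroup H] [InnerProductSpace ℂ H] [CompleteSpace H]
    (ψ : ℕ → H) (h : ∀ k : ℕ, Memℓp (fun l => ⟪ψ k, ψ l⟫) 2) :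
    Dense {f : H | Memℓp (fun k => ⟪ψ k, f⟫) 2} := by
  have hp : (0:ℝ) < (2 : ENNReal).toReal := by norm_num
  set S : Submodule ℂ H :=
    { carrier := {f : H | Memℓp (fun k => ⟪ψ k, f⟫) 2}
      add_mem' := by
        intro f g hf hg
        have : (fun k => ⟪ψ k, f + g⟫) =
            (fun k => ⟪ψ k, f⟫) + fun k => ⟪ψ k, g⟫ := by
          funext k; simp [inner_add_right]
        show Memℓp (fun k => ⟪ψ k, f + g⟫) 2
        rw [this]; exact hf.add hg
      zero_mem' := by
        show Memℓp (fun k => ⟪ψ k, (0 : H)⟫) 2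
        simp only [inner_zero_right]; exact (zero_memℓp : Memℓp (0 : ℕ → ℂ) 2)
      smul_mem' := by
        intro c f hf
        have : (fun k => ⟪ψ k, c • f⟫) = c • fun k => ⟪ψ k, f⟫ := by
          funext k; simp [inner_smul_right]
        show Memℓp (fun k => ⟪ψ k, c • f⟫) 2
        rw [this]; exact hf.const_smul c } with hS
  have hψ : ∀ j, ψ j ∈ S := by
    intro j
    refine memℓp_gen ?_
    have := (memℓp_gen_iff hp).mp (h j)
    refine this.congr fun k => ?_
    rw [norm_inner_symm]
  have : S.topologicalClosure = ⊤ := by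
    rw [Submodule.topologicalClosure_eq_top_iff, Submodule.eq_bot_iff]
    intro f hf
    have hf0 : ∀ k, ⟪ψ k, f⟫ = 0 := by
      intro k
      exact hf (ψ k) (hψ k)
    have hfS : f ∈ S := by
      have : (fun k => ⟪ψ k, f⟫) = (0 : ℕ → ℂ) := funext hf0
      show Memℓp (fun k => ⟪ψ k, f⟫) 2
      rw [this]; exact zero_memℓp
    exact inner_self_eq_zero.mp (hf f hfS)
  exact Submodule.dense_iff_topologicalClosure_eq_top.mpr this
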